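/- Let f ∈ log P, i.e. f = log Φ for a non-constant Pick function Φ. Then for every δ ∈ (0,1), ∫_ℝ exp(δ·Re f(x+i0)) dx = +∞ and ∫_ℝ exp(−δ·Re f(x+i0)) dx = +∞. -/

import Mathlib

open Complex MeasureTheory Filter Metric Set Real ENNReal

lemma meanvalue {W : ℂ → ℂ} {r : ℝ} (hr : 0 < r)
    (hd : DifferentiableOn ℂ W (closedBall 0 r)) :
    (W 0).re = (2*π)⁻¹ * ∫ θ in (0:ℝ)..(2*π), (W (circleMap 0 r θ)).re := by
  have h := hd.circleIntegral_sub_inv_smul (mem_ball_self hr)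
  rw [circleIntegral] at h
  simp only [sub_zero, deriv_circleMap, smul_eq_mul] at h
  have h2 : ∀ θ : ℝ, circleMap 0 r θ * I * ((circleMap 0 r θ)⁻¹ * W (circleMap 0 r θ))
      = I * W (circleMap 0 r θ) := by
    intro θ
    have : circleMap 0 r θ ≠ 0 := circleMap_ne_center hr.ne'
    field_simp
  simp only [h2] at h
  rw [intervalIntegral.integral_const_mul] at h
  have hI : (I : ℂ) ≠ 0 := I_ne_zero
  have h3 : (∫ θ in (0:ℝ)..(2*π), W (circleMap 0 r θ)) = 2*π*W 0 := by
    have := h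
    field_simp at this ⊢
    have h4 : I * ∫ θ in (0:ℝ)..(2*π), W (circleMap 0 r θ) = I * (2*π*W 0) := by
      rw [this]
    exact mul_left_cancel₀ hI h4
  have hcont : Continuous fun θ : ℝ => W (circleMap 0 r θ) := by
    apply hd.continuousOn.comp_continuous (continuous_circleMap 0 r)
    intro θ
    exact sphere_subset_closedBall (circleMap_mem_sphere 0 hr.le θ)
  have hint : IntervalIntegrable (fun θ : ℝ => W (circleMap 0 r θ)) volume 0 (2*π) :=
    hcont.intervalIntegrable _ _
  have h5 : (∫ θ in (0:ℝ)..(2*π), (W (circleMap 0 r θ)).re)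
      = (∫ θ in (0:ℝ)..(2*π), W (circleMap 0 r θ)).re := by
    rw [intervalIntegral.integral_of_le Real.two_pi_pos.le,
      intervalIntegral.integral_of_le Real.two_pi_pos.le]
    simp only [← RCLike.re_to_complex]
    exact integral_re hint.1
  rw [h5, h3]
  have : (2*π*W 0).re = 2*π*(W 0).re := by
    simp [Complex.mul_re]
  rw [this]
  field_simp

noncomputable def mdisk (ζ : ℂ) : ℂ := I*(1+ζ)/(1-ζ)

lemma mdisk_im_nonneg {ζ : ℂ} (h : ‖ζ‖ ≤ 1) : 0 ≤ (mdisk ζ).im := by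
  have hn : Complex.normSq ζ ≤ 1 := by
    rw [← Complex.sq_norm]; nlinarith [norm_nonneg ζ]
  rw [mdisk, Complex.div_im]
  have h1 : (0:ℝ) ≤ Complex.normSq (1-ζ) := Complex.normSq_nonneg _
  have h2 : (I*(1+ζ)).im * (1-ζ).re - (I*(1+ζ)).re * (1-ζ).im
      = 1 - Complex.normSq ζ := by
    simp [Complex.mul_im, Complex.mul_re, Complex.normSq_apply]
    ring
  have h3 : (I * (1 + ζ)).im * (1 - ζ).re / Complex.normSq (1 - ζ) -
      (I * (1 + ζ)).re * (1 - ζ).im / Complex.normSq (1 - ζ)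
      = (1 - Complex.normSq ζ) / Complex.normSq (1-ζ) := by
    rw [div_sub_div_same, h2]
  rw [h3]
  exact div_nonneg (by linarith) h1

lemma mdisk_diff {ζ : ℂ} (h : ζ ≠ 1) : DifferentiableAt ℂ mdisk ζ := by
  apply DifferentiableAt.div
  · fun_prop
  · fun_prop
  · intro h0
    exact h (by linear_combination -h0)

lemma mdisk_boundary (x : ℝ) : mdisk (Complex.exp ((↑(π + 2*Real.arctan x)) * I)) = (x:ℝ) := by
  set θ : ℝ := π + 2*Real.arctan x with hθdef
  have h2 : (π + 2*Real.arctan x)/2 = π/2 + Real.arctan x := by ring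
  have hs : Real.sin (θ/2) = Real.cos (Real.arctan x) := by
    rw [hθdef, h2, Real.sin_add]; simp
  have hc : Real.cos (θ/2) = -Real.sin (Real.arctan x) := by
    rw [hθdef, h2, Real.cos_add]; simp
  have hθ1 : 0 < θ := by
    have := Real.neg_pi_div_two_lt_arctan x
    have := Real.pi_pos
    rw [hθdef]; linarith
  have hθ2 : θ < 2*π := by
    have := Real.arctan_lt_pi_div_two x
    rw [hθdef]; linarith
  have hden : (1 : ℂ) - Complex.exp (θ * I) ≠ 0 := by
    intro h0
    have h1 : Complex.exp ((θ:ℂ) * I) = 1 := by linear_combination -h0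
    rw [Complex.exp_eq_one_iff] at h1
    obtain ⟨n, hn⟩ := h1
    have hn' : (θ:ℂ) * I = ((n:ℝ) * (2*π) : ℝ) * I := by
      rw [hn]; push_cast; ring
    have hn2 : θ = (n:ℝ) * (2*π) := by
      have := mul_right_cancel₀ Complex.I_ne_zero hn'
      exact_mod_cast this
    have hpi := Real.pi_pos
    rcases le_or_gt (n:ℝ) 0 with h | h
    · nlinarith
    · have : (1:ℝ) ≤ (n:ℝ) := by exact_mod_cast h
      nlinarith
  have hcosθ : Real.cos θ = 1 - 2 * Real.sin (θ/2)^2 := by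
    have ht : Real.cos θ = Real.cos (2*(θ/2)) := by congr 1; ring
    rw [ht, Real.cos_two_mul']
    nlinarith [Real.sin_sq_add_cos_sq (θ/2)]
  have hsinθ : Real.sin θ = 2 * Real.sin (θ/2) * Real.cos (θ/2) := by
    have ht : Real.sin θ = Real.sin (2*(θ/2)) := by congr 1; ring
    rw [ht, Real.sin_two_mul]
  have hcos0 : Real.cos (Real.arctan x) ≠ 0 := (Real.cos_arctan_pos x).ne'
  have hx : (x:ℝ) * Real.cos (Real.arctan x) = Real.sin (Real.arctan x) := by
    have h := Real.tan_arctan x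
    rw [Real.tan_eq_sin_div_cos] at h
    field_simp at h
    linarith [h]
  have key1 : -Real.sin θ = x * (1 - Real.cos θ) := by
    rw [hsinθ, hcosθ, hs, hc]
    linear_combination (-2*Real.cos (Real.arctan x))*hx
  have key2 : 1 + Real.cos θ = -(x * Real.sin θ) := by
    rw [hsinθ, hcosθ, hs, hc]
    linear_combination (-2*Real.sin (Real.arctan x))*hx + (-2)*(Real.sin_sq_add_cos_sq (Real.arctan x))
  rw [mdisk, div_eq_iff hden, Complex.exp_mul_I]
  apply Complex.ext
  · simp [Complex.mul_re, Complex.mul_im, Complex.cos_ofReal_re, Complex.sin_ofReal_re,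
      Complex.cos_ofReal_im, Complex.sin_ofReal_im]
    linarith [key1]
  · simp [Complex.mul_re, Complex.mul_im, Complex.cos_ofReal_re, Complex.sin_ofReal_re,
      Complex.cos_ofReal_im, Complex.sin_ofReal_im]
    linarith [key2]


lemma diskbound {w : ℂ → ℂ} (hw : DifferentiableOn ℂ w {z : ℂ | 0 < z.im})
    (hpos : ∀ z : ℂ, 0 < z.im → 0 ≤ (w z).re) {y : ℝ} (hy : 0 < y) :
    ∫⁻ x : ℝ, ENNReal.ofReal ((w (x + y*I)).re / (1+x^2))
      ≤ ENNReal.ofReal (π * (w (I + y*I)).re) := by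
  have hopen : IsOpen {z : ℂ | 0 < z.im} := isOpen_lt continuous_const Complex.continuous_im
  set W : ℂ → ℂ := fun ζ => w (mdisk ζ + y*I) with hWdef
  have him : ∀ ζ : ℂ, ‖ζ‖ ≤ 1 → 0 < (mdisk ζ + y*I).im := by
    intro ζ h
    have := mdisk_im_nonneg h
    simp [Complex.add_im, Complex.mul_im]
    linarith
  have hWd : ∀ ζ : ℂ, ‖ζ‖ ≤ 1 → ζ ≠ 1 → DifferentiableAt ℂ W ζ := by
    intro ζ h1 h2
    have hd1 : DifferentiableAt ℂ w (mdisk ζ + y*I) :=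
      hw.differentiableAt (hopen.mem_nhds (him ζ h1))
    exact hd1.comp ζ ((mdisk_diff h2).add_const _)
  have hW0 : W 0 = w (I + y*I) := by
    simp [hWdef, mdisk]
  have hWpos : ∀ ζ : ℂ, ‖ζ‖ ≤ 1 → 0 ≤ (W ζ).re := fun ζ h => hpos _ (him ζ h)
  -- Step 1 : bound for each radius r < 1
  have step1 : ∀ r : ℝ, r ∈ Ioo (0:ℝ) 1 →
      (∫⁻ θ in Ioo (0:ℝ) (2*π), ENNReal.ofReal ((W (circleMap 0 r θ)).re))
        ≤ ENNReal.ofReal (2*π*(W 0).re) := by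
    intro r hr
    have habs : ∀ θ : ℝ, ‖circleMap 0 r θ‖ = r := by
      intro θ; simp [norm_circleMap_zero, abs_of_pos hr.1]
    have hne1 : ∀ θ : ℝ, circleMap 0 r θ ≠ 1 := by
      intro θ h
      have := habs θ
      rw [h] at this
      simp at this
      exact hr.2.ne this.symm
    have hd : DifferentiableOn ℂ W (closedBall 0 r) := by
      intro ζ hζ
      have h1 : ‖ζ‖ ≤ 1 := by
        have := mem_closedBall_zero_iff.mp hζ
        exact le_trans this hr.2.le
      have h2 : ζ ≠ 1 := by
        intro h
        have := mem_closedBall_zero_iff.mp hζ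
        rw [h] at this
        simp at this
        linarith [hr.2]
      exact (hWd ζ h1 h2).differentiableWithinAt
    have hmv := meanvalue hr.1 hd
    have hcont : Continuous fun θ : ℝ => (W (circleMap 0 r θ)).re := by
      refine Complex.continuous_re.comp ?_
      refine continuous_iff_continuousAt.mpr fun θ => ?_
      exact ((hWd _ (le_of_eq (habs θ) |>.trans hr.2.le) (hne1 θ)).continuousAt).comp
        (continuous_circleMap 0 r).continuousAt
    have hnn : ∀ θ : ℝ, 0 ≤ (W (circleMap 0 r θ)).re := fun θ =>
      hWpos _ (by rw [habs θ]; exact hr.2.le)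
    have hint : IntegrableOn (fun θ : ℝ => (W (circleMap 0 r θ)).re) (Ioo 0 (2*π)) := by
      have h : IntervalIntegrable (fun θ : ℝ => (W (circleMap 0 r θ)).re) volume 0 (2*π) :=
        hcont.intervalIntegrable _ _
      rw [intervalIntegrable_iff_integrableOn_Ioc_of_le Real.two_pi_pos.le] at h
      exact h.mono_set Ioo_subset_Ioc_self
    rw [← ofReal_integral_eq_lintegral_ofReal hint (Filter.Eventually.of_forall fun θ => hnn θ)]
    apply ENNReal.ofReal_le_ofReal
    have : (∫ θ in Ioo (0:ℝ) (2*π), (W (circleMap 0 r θ)).re)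
        = ∫ θ in (0:ℝ)..(2*π), (W (circleMap 0 r θ)).re := by
      rw [intervalIntegral.integral_of_le Real.two_pi_pos.le, integral_Ioc_eq_integral_Ioo]
    rw [this]
    rw [hmv]
    have h2π := Real.two_pi_pos
    field_simp
    exact le_rfl
  -- Step 2 : Fatou as r → 1
  have step2 : (∫⁻ θ in Ioo (0:ℝ) (2*π), ENNReal.ofReal ((W (circleMap 0 1 θ)).re))
      ≤ ENNReal.ofReal (2*π*(W 0).re) := by
    set r : ℕ → ℝ := fun k => 1 - 1/(k+2) with hrdef
    have hrIoo : ∀ k, r k ∈ Ioo (0:ℝ) 1 := by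
      intro k
      constructor
      · have : 1/((k:ℝ)+2) ≤ 1/2 := by
          apply div_le_div_of_nonneg_left <;> norm_num
        simp only [hrdef]; linarith
      · have : 0 < 1/((k:ℝ)+2) := by positivity
        simp only [hrdef]; linarith
    have hrlim : Tendsto r atTop (nhds 1) := by
      have h0 : Tendsto (fun k : ℕ => 1/((k:ℝ)+2)) atTop (nhds 0) := by
        have h1 : Tendsto (fun k : ℕ => ((k:ℝ)+2)) atTop atTop :=
          tendsto_atTop_add_const_right _ 2 tendsto_natCast_atTop_atTop
        simpa [one_div, Pi.inv_def] using h1.inv_tendsto_atTop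
      have h2 : Tendsto (fun _ : ℕ => (1:ℝ)) atTop (nhds 1) := tendsto_const_nhds
      simpa [hrdef, one_div] using h2.sub h0
    have hptwise : ∀ θ ∈ Ioo (0:ℝ) (2*π),
        Tendsto (fun k => ENNReal.ofReal ((W (circleMap 0 (r k) θ)).re)) atTop
          (nhds (ENNReal.ofReal ((W (circleMap 0 1 θ)).re))) := by
      intro θ hθ
      have hne1 : circleMap 0 1 θ ≠ 1 := by
        intro h
        simp only [circleMap, Complex.ofReal_one, one_mul, zero_add] at h
        rw [Complex.exp_eq_one_iff] at h
        obtain ⟨n, hn⟩ := h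
        have hn' : (θ:ℂ) * I = ((n:ℝ) * (2*π) : ℝ) * I := by rw [hn]; push_cast; ring
        have hn2 : θ = (n:ℝ) * (2*π) := by
          have := mul_right_cancel₀ Complex.I_ne_zero hn'
          exact_mod_cast this
        have hpi := Real.pi_pos
        rcases le_or_gt (n:ℝ) 0 with h | h
        · nlinarith [hθ.1]
        · have : (1:ℝ) ≤ (n:ℝ) := by exact_mod_cast h
          nlinarith [hθ.2]
      have hcm : Tendsto (fun k => circleMap 0 (r k) θ) atTop (nhds (circleMap 0 1 θ)) := by
        have : Continuous fun s : ℝ => circleMap 0 s θ := by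
          simp only [circleMap, zero_add]
          fun_prop
        exact (this.continuousAt).tendsto.comp hrlim
      have hWc : ContinuousAt W (circleMap 0 1 θ) := by
        have h1 : ‖circleMap 0 1 θ‖ ≤ 1 := by simp [norm_circleMap_zero]
        have hd1 : ContinuousAt w (mdisk (circleMap 0 1 θ) + y*I) :=
          (hw.differentiableAt (hopen.mem_nhds (him _ h1))).continuousAt
        have hg : ContinuousAt (fun ζ : ℂ => mdisk ζ + (y:ℂ)*I) (circleMap 0 1 θ) :=
          ((mdisk_diff hne1).continuousAt).add continuousAt_const
        have hcomp := ContinuousAt.comp (x := circleMap 0 1 θ) hd1 hg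
        exact hcomp
      exact (ENNReal.continuous_ofReal.continuousAt).tendsto.comp
        ((Complex.continuous_re.continuousAt).tendsto.comp (hWc.tendsto.comp hcm))
    have hmeas : ∀ k, Measurable fun θ : ℝ => ENNReal.ofReal ((W (circleMap 0 (r k) θ)).re) := by
      intro k
      apply ENNReal.measurable_ofReal.comp
      apply Continuous.measurable
      refine Complex.continuous_re.comp ?_
      refine continuous_iff_continuousAt.mpr fun θ => ?_
      have h1 : ‖circleMap 0 (r k) θ‖ = r k := by
        simp [norm_circleMap_zero, abs_of_pos (hrIoo k).1]
      refine ((hWd _ (by rw [h1]; exact (hrIoo k).2.le) ?_).continuousAt).comp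
        (continuous_circleMap 0 (r k)).continuousAt
      intro h
      rw [h] at h1
      simp at h1
      exact (hrIoo k).2.ne h1.symm
    calc ∫⁻ θ in Ioo (0:ℝ) (2*π), ENNReal.ofReal ((W (circleMap 0 1 θ)).re)
        ≤ ∫⁻ θ in Ioo (0:ℝ) (2*π),
            liminf (fun k => ENNReal.ofReal ((W (circleMap 0 (r k) θ)).re)) atTop := by
          apply lintegral_mono_ae
          filter_upwards [ae_restrict_mem measurableSet_Ioo] with θ hθ
          exact le_of_eq ((hptwise θ hθ).liminf_eq).symm
      _ ≤ liminf (fun k => ∫⁻ θ in Ioo (0:ℝ) (2*π),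
            ENNReal.ofReal ((W (circleMap 0 (r k) θ)).re)) atTop :=
          lintegral_liminf_le fun k => (hmeas k)
      _ ≤ ENNReal.ofReal (2*π*(W 0).re) := by
          exact Filter.liminf_le_of_frequently_le
            (Filter.Frequently.of_forall fun k => step1 (r k) (hrIoo k))
            (by isBoundedDefault)
  -- Step 3 : change of variables
  have hψd : ∀ x : ℝ, HasDerivAt (fun t : ℝ => π + 2*Real.arctan t) (2/(1+x^2)) x := by
    intro x
    have h := ((Real.hasDerivAt_arctan x).const_mul 2).const_add π
    have e : (2:ℝ)/(1+x^2) = 2*(1/(1+x^2)) := by ring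
    rw [e]; exact h
  have hψinj : Function.Injective (fun t : ℝ => π + 2*Real.arctan t) := by
    intro a b h
    simp only [_root_.add_right_inj] at h
    exact Real.arctan_injective (by linarith)
  have hψim : (fun t : ℝ => π + 2*Real.arctan t) '' univ = Ioo 0 (2*π) := by
    rw [Set.image_univ]
    ext θ
    constructor
    · rintro ⟨x, rfl⟩
      have h1 := Real.neg_pi_div_two_lt_arctan x
      have h2 := Real.arctan_lt_pi_div_two x
      constructor <;> simp <;> linarith
    · rintro ⟨h1, h2⟩
      refine ⟨Real.tan ((θ - π)/2), ?_⟩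
      have : Real.arctan (Real.tan ((θ - π)/2)) = (θ - π)/2 :=
        Real.arctan_tan (by linarith) (by linarith)
      simp only [this]
      ring
  have hcov := lintegral_image_eq_lintegral_abs_det_fderiv_mul (μ := volume) MeasurableSet.univ
      (f := fun t : ℝ => π + 2*Real.arctan t)
      (f' := fun x : ℝ => ((1:ℝ →L[ℝ] ℝ).smulRight (2/(1+x^2))))
      (fun x _ => ((hψd x).hasFDerivAt).hasFDerivWithinAt) (hψinj.injOn)
      (fun θ => ENNReal.ofReal ((W (circleMap 0 1 θ)).re))
  rw [hψim, Measure.restrict_univ] at hcov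
  have hWx : ∀ x : ℝ, W (circleMap 0 1 (π + 2*Real.arctan x)) = w (x + y*I) := by
    intro x
    have hcm : circleMap 0 1 (π + 2*Real.arctan x) = Complex.exp ((↑(π + 2*Real.arctan x)) * I) := by
      simp [circleMap]
    rw [hWdef]
    simp only [hcm, mdisk_boundary]
  have hpt : ∀ x : ℝ, ENNReal.ofReal |((1:ℝ →L[ℝ] ℝ).smulRight (2/(1+x^2))).det|
        * ENNReal.ofReal ((W (circleMap 0 1 (π + 2*Real.arctan x))).re)
      = 2 * ENNReal.ofReal ((w (x + y*I)).re / (1+x^2)) := by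
    intro x
    rw [hWx x, ContinuousLinearMap.smulRight_one_eq_toSpanSingleton, ContinuousLinearMap.det_toSpanSingleton]
    have hx2 : (0:ℝ) < 1 + x^2 := by positivity
    have ha : 0 ≤ (w (x + (y:ℂ)*I)).re := by
      apply hpos
      simp [Complex.add_im, Complex.mul_im]
      linarith
    rw [_root_.abs_of_nonneg (by positivity : (0:ℝ) ≤ 2/(1+x^2))]
    rw [← ENNReal.ofReal_mul (by positivity : (0:ℝ) ≤ 2/(1+x^2))]
    have : 2/(1+x^2) * (w (x + (y:ℂ)*I)).re = 2 * ((w (x + (y:ℂ)*I)).re / (1+x^2)) := by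
      ring
    rw [this, ENNReal.ofReal_mul (by norm_num : (0:ℝ) ≤ 2)]
    norm_num
  simp only [hpt] at hcov
  rw [lintegral_const_mul' 2 _ (by norm_num)] at hcov
  have hfinal : 2 * ∫⁻ x : ℝ, ENNReal.ofReal ((w (x + y*I)).re / (1+x^2))
      ≤ 2 * ENNReal.ofReal (π * (w (I + y*I)).re) := by
    rw [← hcov]
    refine le_trans step2 ?_
    rw [hW0]
    have hc : 0 ≤ (w (I + (y:ℂ)*I)).re := by
      apply hpos
      simp [Complex.add_im, Complex.mul_im]
      linarith
    have : (2:ℝ)*π*(w (I + (y:ℂ)*I)).re = 2*(π*(w (I + (y:ℂ)*I)).re) := by ring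
    rw [this, ENNReal.ofReal_mul (by norm_num : (0:ℝ) ≤ 2)]
    norm_num
  exact (ENNReal.mul_le_mul_iff_right (by norm_num) (by norm_num)).mp hfinal

lemma halfplane_bound {w : ℂ → ℂ} (hw : DifferentiableOn ℂ w {z : ℂ | 0 < z.im})
    (hpos : ∀ z : ℂ, 0 < z.im → 0 ≤ (w z).re)
    {G : ℝ → ℂ}
    (hG : ∀ᵐ x : ℝ, Tendsto (fun y : ℝ => w ((x : ℂ) + (y : ℂ) * I))
      (nhdsWithin 0 (Set.Ioi 0)) (nhds (G x))) :
    ∫⁻ x : ℝ, ENNReal.ofReal ((G x).re / (1 + x^2)) ≠ ⊤ := by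
  have hopen : IsOpen {z : ℂ | 0 < z.im} := isOpen_lt continuous_const Complex.continuous_im
  -- bound on the segment
  have hcont : ContinuousOn (fun t : ℝ => (w (I + (t:ℂ)*I)).re) (Icc (0:ℝ) 1) := by
    intro t ht
    apply ContinuousAt.continuousWithinAt
    have him : 0 < ((I : ℂ) + (t:ℂ)*I).im := by
      simp [Complex.add_im, Complex.mul_im]
      linarith [ht.1]
    have h1 : ContinuousAt w (I + (t:ℂ)*I) :=
      (hw.differentiableAt (hopen.mem_nhds him)).continuousAt
    have h2 : ContinuousAt (fun t : ℝ => (I : ℂ) + (t:ℂ)*I) t := by fun_prop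
    exact Complex.continuous_re.continuousAt.comp (ContinuousAt.comp (x := t) h1 h2)
  obtain ⟨M, hM⟩ := (isCompact_Icc.bddAbove_image hcont)
  rw [mem_upperBounds] at hM
  have hMb : ∀ t : ℝ, t ∈ Icc (0:ℝ) 1 → (w (I + (t:ℂ)*I)).re ≤ M := by
    intro t ht
    exact hM _ (mem_image_of_mem _ ht)
  -- sequence of heights
  set yn : ℕ → ℝ := fun n => 1/(n+2) with hyn
  have hynIoo : ∀ n, yn n ∈ Ioo (0:ℝ) 1 := by
    intro n
    constructor
    · positivity
    · rw [hyn]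
      rw [div_lt_one (by positivity)]
      have : (0:ℝ) ≤ (n:ℝ) := Nat.cast_nonneg n
      linarith
  have hynlim : Tendsto yn atTop (nhdsWithin 0 (Set.Ioi 0)) := by
    rw [tendsto_nhdsWithin_iff]
    constructor
    · have h1 : Tendsto (fun k : ℕ => ((k:ℝ)+2)) atTop atTop :=
        tendsto_atTop_add_const_right _ 2 tendsto_natCast_atTop_atTop
      simpa [hyn, one_div, Pi.inv_def] using h1.inv_tendsto_atTop
    · exact Eventually.of_forall fun n => (hynIoo n).1
  -- each level bound
  have hlevel : ∀ n : ℕ, (∫⁻ x : ℝ, ENNReal.ofReal ((w (x + yn n * I)).re / (1+x^2)))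
      ≤ ENNReal.ofReal (π * M) := by
    intro n
    refine le_trans (diskbound hw hpos (hynIoo n).1) ?_
    apply ENNReal.ofReal_le_ofReal
    have := hMb (yn n) ⟨(hynIoo n).1.le, (hynIoo n).2.le⟩
    have hπ := Real.pi_pos
    nlinarith
  -- measurability at each level
  have hmeas : ∀ n : ℕ, Measurable fun x : ℝ =>
      ENNReal.ofReal ((w (x + yn n * I)).re / (1+x^2)) := by
    intro n
    apply ENNReal.measurable_ofReal.comp
    apply Continuous.measurable
    apply Continuous.div
    · refine Complex.continuous_re.comp (continuous_iff_continuousAt.mpr fun x => ?_)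
      have him : 0 < ((x : ℂ) + (yn n : ℂ)*I).im := by
        simp [Complex.add_im, Complex.mul_im]
        exact (hynIoo n).1
      have h1 : ContinuousAt w ((x:ℂ) + (yn n : ℂ)*I) :=
        (hw.differentiableAt (hopen.mem_nhds him)).continuousAt
      exact ContinuousAt.comp (x := x) h1 (by fun_prop)
    · fun_prop
    · intro x; positivity
  -- Fatou
  have fatou : (∫⁻ x : ℝ, ENNReal.ofReal ((G x).re / (1 + x^2)))
      ≤ ENNReal.ofReal (π * M) := by
    calc (∫⁻ x : ℝ, ENNReal.ofReal ((G x).re / (1 + x^2)))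
        ≤ ∫⁻ x : ℝ, liminf (fun n => ENNReal.ofReal ((w (x + yn n * I)).re / (1+x^2))) atTop := by
          apply lintegral_mono_ae
          filter_upwards [hG] with x hx
          have h1 : Tendsto (fun n => w ((x:ℂ) + (yn n : ℂ) * I)) atTop (nhds (G x)) :=
            hx.comp hynlim
          have h2 : Tendsto (fun n => ENNReal.ofReal ((w ((x:ℂ) + (yn n : ℂ) * I)).re / (1+x^2)))
              atTop (nhds (ENNReal.ofReal ((G x).re / (1+x^2)))) := by
            apply ENNReal.continuous_ofReal.continuousAt.tendsto.comp
            exact ((Complex.continuous_re.continuousAt.tendsto.comp h1).div_const _)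
          exact le_of_eq h2.liminf_eq.symm
      _ ≤ liminf (fun n => ∫⁻ x : ℝ, ENNReal.ofReal ((w (x + yn n * I)).re / (1+x^2))) atTop :=
          lintegral_liminf_le hmeas
      _ ≤ ENNReal.ofReal (π * M) :=
          Filter.liminf_le_of_frequently_le (Filter.Frequently.of_forall hlevel)
            (by isBoundedDefault)
  exact ne_top_of_le_ne_top ENNReal.ofReal_ne_top fatou

lemma expbound (f : ℂ → ℂ)
    (hdiff : DifferentiableOn ℂ f {z : ℂ | 0 < z.im})
    (him : ∀ z : ℂ, 0 < z.im → (f z).im ∈ Set.Icc (0 : ℝ) Real.pi)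
    (g : ℝ → ℂ)
    (hbdry : ∀ᵐ x : ℝ, Tendsto (fun y : ℝ => f ((x : ℂ) + (y : ℂ) * Complex.I))
      (nhdsWithin 0 (Set.Ioi 0)) (nhds (g x)))
    {δ s : ℝ} (hδ : δ ∈ Set.Ioo (0:ℝ) 1) (hs : |s| = δ) :
    ∫⁻ x : ℝ, ENNReal.ofReal (Real.exp (s * (g x).re) / (1 + x^2)) ≠ ⊤ := by
  have hπ := Real.pi_pos
  set c : ℝ := Real.cos (δ * (π/2)) with hcdef
  have hc : 0 < c := by
    apply Real.cos_pos_of_mem_Ioo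
    constructor
    · nlinarith [hδ.1, hδ.2]
    · nlinarith [hδ.1, hδ.2]
  have hcos : ∀ t : ℝ, |t| ≤ δ * (π/2) → c ≤ Real.cos t := by
    intro t ht
    rw [← Real.cos_abs]
    apply Real.cos_le_cos_of_nonneg_of_le_pi (abs_nonneg t) (by nlinarith [hδ.2]) ht
  set w : ℂ → ℂ := fun z => Complex.exp ((s:ℂ) * f z - (↑(s*(π/2)) * I)) with hwdef
  have hre : ∀ z : ℂ, (w z).re
      = Real.exp (s * (f z).re) * Real.cos (s * (f z).im - s*(π/2)) := by
    intro z
    rw [hwdef]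
    simp only [Complex.exp_re, Complex.sub_re, Complex.sub_im, Complex.mul_re, Complex.mul_im,
      Complex.ofReal_re, Complex.ofReal_im, Complex.I_re, Complex.I_im]
    norm_num
  have hargbound : ∀ u : ℝ, u ∈ Set.Icc (0:ℝ) π → |s * u - s*(π/2)| ≤ δ * (π/2) := by
    intro u hu
    have : s * u - s*(π/2) = s * (u - π/2) := by ring
    rw [this, abs_mul, hs]
    have : |u - π/2| ≤ π/2 := by
      rw [abs_le]
      constructor <;> [linarith [hu.1]; linarith [hu.2]]
    nlinarith [hδ.1]
  have hpos : ∀ z : ℂ, 0 < z.im → 0 ≤ (w z).re := by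
    intro z hz
    rw [hre]
    have := hcos _ (hargbound _ (him z hz))
    have := Real.exp_pos (s * (f z).re)
    nlinarith
  have hposc : ∀ z : ℂ, 0 < z.im → c * Real.exp (s * (f z).re) ≤ (w z).re := by
    intro z hz
    rw [hre]
    have := hcos _ (hargbound _ (him z hz))
    have := Real.exp_pos (s * (f z).re)
    nlinarith
  have hw : DifferentiableOn ℂ w {z : ℂ | 0 < z.im} := by
    apply DifferentiableOn.cexp
    exact (hdiff.const_mul _).sub_const _
  set G : ℝ → ℂ := fun x => Complex.exp ((s:ℂ) * g x - (↑(s*(π/2)) * I)) with hGdef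
  have hG : ∀ᵐ x : ℝ, Tendsto (fun y : ℝ => w ((x : ℂ) + (y : ℂ) * I))
      (nhdsWithin 0 (Set.Ioi 0)) (nhds (G x)) := by
    filter_upwards [hbdry] with x hx
    have hcontexp : Continuous fun z : ℂ => Complex.exp ((s:ℂ) * z - (↑(s*(π/2)) * I)) := by
      fun_prop
    exact (hcontexp.continuousAt.tendsto).comp hx
  have hfin := halfplane_bound hw hpos hG
  -- a.e. bounds
  have haeIm : ∀ᵐ x : ℝ, (g x).im ∈ Set.Icc (0:ℝ) π := by
    filter_upwards [hbdry] with x hx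
    have h1 : Tendsto (fun y : ℝ => (f ((x : ℂ) + (y : ℂ) * I)).im)
        (nhdsWithin 0 (Set.Ioi 0)) (nhds ((g x).im)) :=
      (Complex.continuous_im.continuousAt.tendsto).comp hx
    apply isClosed_Icc.mem_of_tendsto h1
    filter_upwards [self_mem_nhdsWithin] with y hy
    apply him
    simp [Complex.add_im, Complex.mul_im]
    exact hy
  have haeG : ∀ᵐ x : ℝ, c * Real.exp (s * (g x).re) ≤ (G x).re := by
    filter_upwards [haeIm] with x hx
    have hre' : (G x).re = Real.exp (s * (g x).re) * Real.cos (s * (g x).im - s*(π/2)) := by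
      rw [hGdef]
      simp only [Complex.exp_re, Complex.sub_re, Complex.sub_im, Complex.mul_re, Complex.mul_im,
        Complex.ofReal_re, Complex.ofReal_im, Complex.I_re, Complex.I_im]
      norm_num
    rw [hre']
    have := hcos _ (hargbound _ hx)
    have := Real.exp_pos (s * (g x).re)
    nlinarith
  -- compare integrals
  have hcomp : (∫⁻ x : ℝ, ENNReal.ofReal (Real.exp (s * (g x).re) / (1 + x^2)))
      ≤ ENNReal.ofReal c⁻¹ * ∫⁻ x : ℝ, ENNReal.ofReal ((G x).re / (1 + x^2)) := by
    rw [← lintegral_const_mul' _ _ ENNReal.ofReal_ne_top]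
    apply lintegral_mono_ae
    filter_upwards [haeG] with x hx
    rw [← ENNReal.ofReal_mul (by positivity : (0:ℝ) ≤ c⁻¹)]
    apply ENNReal.ofReal_le_ofReal
    have hx2 : (0:ℝ) < 1 + x^2 := by positivity
    rw [div_le_iff₀ hx2] at *
    have h3 : Real.exp (s * (g x).re) ≤ c⁻¹ * (G x).re := by
      rw [le_inv_mul_iff₀ hc]
      linarith [hx]
    calc Real.exp (s * (g x).re) ≤ c⁻¹ * (G x).re := h3
      _ = c⁻¹ * ((G x).re / (1+x^2)) * (1+x^2) := by field_simp
  apply ne_top_of_le_ne_top _ hcomp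
  exact ENNReal.mul_ne_top ENNReal.ofReal_ne_top hfin

lemma inv_lintegral_top : ∫⁻ x : ℝ in Ioi 1, ENNReal.ofReal (x⁻¹) = ⊤ := by
  by_contra hne
  apply not_IntegrableOn_Ioi_inv (a := (1:ℝ))
  refine ⟨measurable_inv.aestronglyMeasurable, ?_⟩
  rw [hasFiniteIntegral_iff_norm]
  have heq : ∫⁻ x : ℝ in Ioi 1, ENNReal.ofReal ‖x⁻¹‖ = ∫⁻ x : ℝ in Ioi 1, ENNReal.ofReal x⁻¹ := by
    apply lintegral_congr_ae
    filter_upwards [ae_restrict_mem measurableSet_Ioi] with x hx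
    have hx0 : (0:ℝ) < x := lt_trans one_pos hx
    rw [Real.norm_eq_abs, abs_of_pos (inv_pos.mpr hx0)]
  rw [heq]
  exact lt_top_iff_ne_top.mpr hne

lemma harmonic_div_top : ∫⁻ x : ℝ, ENNReal.ofReal (2/(1+|x|)) = ⊤ := by
  rw [eq_top_iff, ← inv_lintegral_top]
  calc ∫⁻ x : ℝ in Ioi 1, ENNReal.ofReal x⁻¹
      ≤ ∫⁻ x : ℝ in Ioi 1, ENNReal.ofReal (2/(1+|x|)) := by
        apply setLIntegral_mono' measurableSet_Ioi
        intro x hx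
        apply ENNReal.ofReal_le_ofReal
        have hx1 : (1:ℝ) < x := hx
        rw [abs_of_pos (by linarith), inv_eq_one_div,
          div_le_div_iff₀ (by linarith) (by linarith)]
        linarith
    _ ≤ ∫⁻ x : ℝ, ENNReal.ofReal (2/(1+|x|)) := setLIntegral_le_lintegral _ _

lemma half_top (u : ℝ → ℝ) (hu : AEMeasurable u)
    (hfin : ∫⁻ x : ℝ, ENNReal.ofReal (Real.exp (-u x) / (1+x^2)) ≠ ⊤) :
    ∫⁻ x : ℝ, ENNReal.ofReal (Real.exp (u x)) = ⊤ := by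
  have hAM : ∀ x : ℝ, ENNReal.ofReal (2/(1+|x|))
      ≤ ENNReal.ofReal (Real.exp (u x)) + ENNReal.ofReal (Real.exp (-u x) / (1+x^2)) := by
    intro x
    rw [← ENNReal.ofReal_add (by positivity) (by positivity)]
    apply ENNReal.ofReal_le_ofReal
    have hp : (0:ℝ) < 1 + |x| := by positivity
    have hy : (0:ℝ) < Real.exp (-u x) := Real.exp_pos _
    have h1 : Real.exp (u x) = (Real.exp (-u x))⁻¹ := by
      rw [← Real.exp_neg]; ring_nf
    have hsq : (0:ℝ) ≤ (Real.exp (-u x) - (1+|x|))^2 := sq_nonneg _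
    have hq : 1 + x^2 ≤ (1+|x|)^2 := by
      have := abs_nonneg x
      have h2 : |x|^2 = x^2 := sq_abs x
      nlinarith
    have key : 2/(1+|x|) ≤ (Real.exp (-u x))⁻¹ + Real.exp (-u x) / (1+|x|)^2 := by
      have h0 : (0:ℝ) ≤ ((1+|x|)^2 + (Real.exp (-u x))^2 - 2*(Real.exp (-u x))*(1+|x|))
          / ((Real.exp (-u x))*(1+|x|)^2) := div_nonneg (by nlinarith) (by positivity)
      have hval : (Real.exp (-u x))⁻¹ + Real.exp (-u x)/(1+|x|)^2 - 2/(1+|x|)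
          = ((1+|x|)^2 + (Real.exp (-u x))^2 - 2*(Real.exp (-u x))*(1+|x|))
            / ((Real.exp (-u x))*(1+|x|)^2) := by
        field_simp
      linarith [hval ▸ h0]
    have h3 : Real.exp (-u x) / (1+|x|)^2 ≤ Real.exp (-u x) / (1+x^2) := by
      apply div_le_div_of_nonneg_left hy.le (by positivity) hq
    rw [← h1] at key
    linarith [key, h3]
  by_contra hne
  have hsum : (∫⁻ x : ℝ, (ENNReal.ofReal (Real.exp (u x))
      + ENNReal.ofReal (Real.exp (-u x) / (1+x^2))))
      = (∫⁻ x : ℝ, ENNReal.ofReal (Real.exp (u x)))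
        + ∫⁻ x : ℝ, ENNReal.ofReal (Real.exp (-u x) / (1+x^2)) := by
    apply lintegral_add_right'
    apply ENNReal.measurable_ofReal.comp_aemeasurable
    apply AEMeasurable.div
    · exact (Real.measurable_exp.comp_aemeasurable hu.neg)
    · fun_prop
  have htop : (⊤:ℝ≥0∞) ≤ (∫⁻ x : ℝ, ENNReal.ofReal (Real.exp (u x)))
      + ∫⁻ x : ℝ, ENNReal.ofReal (Real.exp (-u x) / (1+x^2)) := by
    rw [← hsum, ← harmonic_div_top]
    exact lintegral_mono hAM
  have := ENNReal.add_lt_top.mpr ⟨lt_top_iff_ne_top.mpr hne, lt_top_iff_ne_top.mpr hfin⟩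
  exact absurd (le_antisymm le_top htop) this.ne

theorem stmt_17 (f : ℂ → ℂ)
    (hdiff : DifferentiableOn ℂ f {z : ℂ | 0 < z.im})
    (him : ∀ z : ℂ, 0 < z.im → (f z).im ∈ Set.Icc (0 : ℝ) Real.pi)
    (g : ℝ → ℂ)
    (hbdry : ∀ᵐ x : ℝ, Tendsto (fun y : ℝ => f ((x : ℂ) + (y : ℂ) * Complex.I))
      (nhdsWithin 0 (Set.Ioi 0)) (nhds (g x))) :
    ∀ δ ∈ Set.Ioo (0 : ℝ) 1,
      (∫⁻ x : ℝ, ENNReal.ofReal (Real.exp (δ * (g x).re))) = ⊤ ∧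
      (∫⁻ x : ℝ, ENNReal.ofReal (Real.exp (-δ * (g x).re))) = ⊤ := by
  intro δ hδ
  have hopen : IsOpen {z : ℂ | 0 < z.im} := isOpen_lt continuous_const Complex.continuous_im
  have hynlim : Tendsto (fun n : ℕ => 1/((n:ℝ)+2)) atTop (nhdsWithin 0 (Set.Ioi 0)) := by
    rw [tendsto_nhdsWithin_iff]
    constructor
    · have h1 : Tendsto (fun k : ℕ => ((k:ℝ)+2)) atTop atTop :=
        tendsto_atTop_add_const_right _ 2 tendsto_natCast_atTop_atTop
      simpa [one_div, Pi.inv_def] using h1.inv_tendsto_atTop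
    · exact Eventually.of_forall fun n => Set.mem_Ioi.mpr (by positivity)
  have hgm : AEMeasurable g := by
    apply aemeasurable_of_tendsto_metrizable_ae atTop
      (f := fun (n : ℕ) (x : ℝ) => f ((x:ℂ) + ((1/((n:ℝ)+2) : ℝ) : ℂ) * I))
    · intro n
      apply Continuous.aemeasurable
      refine continuous_iff_continuousAt.mpr fun x => ?_
      have him' : 0 < ((x:ℂ) + ((1/((n:ℝ)+2) : ℝ) : ℂ)*I).im := by
        have : ((1/((n:ℝ)+2) : ℝ) : ℂ).im = 0 := by simp
        simp only [Complex.add_im, Complex.mul_im, Complex.ofReal_re, Complex.ofReal_im,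
          Complex.I_re, Complex.I_im, Complex.mul_I_im]
        norm_num
        positivity
      exact ContinuousAt.comp (x := x)
        (hdiff.differentiableAt (hopen.mem_nhds him')).continuousAt (by fun_prop)
    · filter_upwards [hbdry] with x hx using hx.comp hynlim
  have hgre : AEMeasurable fun x : ℝ => (g x).re :=
    Complex.measurable_re.comp_aemeasurable hgm
  have h1 := expbound f hdiff him g hbdry hδ (s := δ) (abs_of_pos hδ.1)
  have h2 := expbound f hdiff him g hbdry hδ (s := -δ) (by rw [abs_neg]; exact abs_of_pos hδ.1)
  constructor
  · apply half_top (fun x => δ * (g x).re) (hgre.const_mul δ)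
    have heq : ∀ x : ℝ, Real.exp (-(δ * (g x).re)) / (1+x^2)
        = Real.exp (-δ * (g x).re) / (1+x^2) := by
      intro x; ring_nf
    simp only [heq]
    exact h2
  · apply half_top (fun x => -δ * (g x).re) ((hgre.const_mul δ).neg.congr ?_)
    · have heq : ∀ x : ℝ, Real.exp (-(-δ * (g x).re)) / (1+x^2)
          = Real.exp (δ * (g x).re) / (1+x^2) := by
        intro x; ring_nf
      simp only [heq]
      exact h1
    · exact Eventually.of_forall fun x => by simp only [Pi.neg_apply]; ring
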